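/- Let k be a field and n ≥ 1. In the ring A = k[t][a,b]/(a^2 + t a b + b^2), one has (a^{n}, b^{n}) A :_{k[t]} a b^{n−1} = (P_{n−1}) as ideals of k[t], where P_j is defined by P_0 = 1, P_1 = t, P_{j+1} = t P_j − P_{j−1}. Equivalently, for g ∈ k[t]: g · a b^{n−1} ∈ (a^n, b^n, a^2 + t a b + b^2) k[t,a,b] if and only if P_{n−1} divides g. -/

import Mathlib

open MvPolynomial

/-- In `k[t,a,b]` (with `t = X 0`, `a = X 1`, `b = X 2`), for `n ≥ 1` and
`g ∈ k[t]`: `g · a b^{n-1} ∈ (a^n, b^n, a² + t a b + b²)` iff `P_{n-1} ∣ g`, where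
`P_0 = 1`, `P_1 = t`, `P_{j+1} = t P_j - P_{j-1}`. -/
theorem stmt13 {k : Type*} [Field k] (P : ℕ → Polynomial k)
    (hP0 : P 0 = 1) (hP1 : P 1 = Polynomial.X)
    (hPrec : ∀ j : ℕ, 1 ≤ j → P (j + 1) = Polynomial.X * P j - P (j - 1)) :
    ∀ n : ℕ, 1 ≤ n → ∀ g : Polynomial k,
      (Polynomial.aeval (X 0 : MvPolynomial (Fin 3) k) g * (X 1) * (X 2) ^ (n - 1) ∈
        Ideal.span {(X 1 : MvPolynomial (Fin 3) k) ^ n, (X 2) ^ n,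
          (X 1) ^ 2 + (X 0) * (X 1) * (X 2) + (X 2) ^ 2}) ↔ P (n - 1) ∣ g := by
  -- companion sequence V
  set V : ℕ → Polynomial k := fun j => if j = 0 then 0 else P (j - 1) with hV
  have hV0 : V 0 = 0 := rfl
  have hVs : ∀ j : ℕ, V (j + 1) = P j := by intro j; simp [hV]
  have hPV : ∀ j : ℕ, P (j + 1) = Polynomial.X * P j - V j := by
    intro j
    cases j with
    | zero => simp [hP1, hP0, hV0]
    | succ i => rw [hPrec (i + 1) (by omega), hVs]; simp
  intro n hn g
  obtain ⟨m, rfl⟩ : ∃ m, n = m + 1 := ⟨n - 1, by omega⟩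
  simp only [Nat.add_sub_cancel]
  set q : MvPolynomial (Fin 3) k :=
    (X 1) ^ 2 + (X 0) * (X 1) * (X 2) + (X 2) ^ 2 with hq
  set pc : Polynomial k → MvPolynomial (Fin 3) k :=
    fun p => Polynomial.aeval (X 0 : MvPolynomial (Fin 3) k) p with hpc
  have hpcmul : ∀ p r : Polynomial k, pc (p * r) = pc p * pc r := fun p r => map_mul _ p r
  -- key identity in k[t,a,b]
  have hcl : ∀ j : ℕ, ∃ w : MvPolynomial (Fin 3) k,
      (X 1 : MvPolynomial (Fin 3) k) ^ (j + 1)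
        - (-1 : MvPolynomial (Fin 3) k) ^ j *
          (pc (P j) * X 1 * (X 2) ^ j + pc (V j) * (X 2) ^ (j + 1)) = q * w := by
    intro j
    induction j with
    | zero =>
        refine ⟨0, ?_⟩
        simp [hP0, hV0, hpc]
    | succ i ih =>
        obtain ⟨w, hw⟩ := ih
        refine ⟨X 1 * w + (-1 : MvPolynomial (Fin 3) k) ^ i * pc (P i) * (X 2) ^ i, ?_⟩
        have h1 : pc (P (i + 1)) = X 0 * pc (P i) - pc (V i) := by
          rw [hPV i]; simp [hpc]
        have h2 : pc (V (i + 1)) = pc (P i) := by rw [hVs]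
        rw [h1, h2, hq]
        linear_combination (X 1 : MvPolynomial (Fin 3) k) * hw
  constructor
  · -- hard direction
    intro hmem
    -- set up the test ring D = k[t][y]/(y^2+ty+1)
    set qa : Polynomial (Polynomial k) :=
      Polynomial.X ^ 2 + Polynomial.C Polynomial.X * Polynomial.X + 1 with hqa
    have hmon : qa.Monic := by unfold qa; monicity!
    have hdeg : qa.degree = 2 := by unfold qa; compute_degree!
    set D := AdjoinRoot qa with hD
    set y : D := AdjoinRoot.root qa with hy'
    set o : Polynomial k →+* D := AdjoinRoot.of qa with ho
    have hy : y ^ 2 + o Polynomial.X * y + 1 = 0 := by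
      have h := AdjoinRoot.eval₂_root qa
      simpa [hqa, Polynomial.eval₂_add, Polynomial.eval₂_mul, Polynomial.eval₂_pow,
        Polynomial.eval₂_X, Polynomial.eval₂_C, Polynomial.eval₂_one] using h
    -- the coefficient-extraction lemma
    have hρ : ∀ r s : Polynomial k,
        ((AdjoinRoot.modByMonicHom hmon) (o r + o s * y)).coeff 1 = s := by
      intro r s
      have h1 : o r + o s * y
          = AdjoinRoot.mk qa (Polynomial.C r + Polynomial.C s * Polynomial.X) := by
        rw [map_add, map_mul, AdjoinRoot.mk_C, AdjoinRoot.mk_C, AdjoinRoot.mk_X]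
      have h2 : (Polynomial.C r + Polynomial.C s * Polynomial.X).degree < qa.degree := by
        rw [hdeg]
        apply lt_of_le_of_lt ?_ (by norm_num : (1 : WithBot ℕ) < 2)
        compute_degree
      rw [h1, AdjoinRoot.modByMonicHom_mk,
        (Polynomial.modByMonic_eq_self_iff hmon).2 h2]
      simp [Polynomial.coeff_C]
    -- powers of y
    have hyp : ∀ j : ℕ, y ^ (j + 1) = (-1 : D) ^ j * (o (V j) + o (P j) * y) := by
      intro j
      induction j with
      | zero => simp [hV0, hP0]
      | succ i ih =>
          have h1 : o (P (i + 1)) = o Polynomial.X * o (P i) - o (V i) := by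
            rw [hPV i, map_sub, map_mul]
          rw [hVs, h1]
          linear_combination y * ih + (-1 : D) ^ i * o (P i) * hy
    -- the algebra map Ψ : k[t,a,b] → D[X]
    set Ψ : MvPolynomial (Fin 3) k →ₐ[k] Polynomial D :=
      MvPolynomial.aeval
        ![Polynomial.C (o Polynomial.X), Polynomial.C y * Polynomial.X,
          (Polynomial.X : Polynomial D)] with hΨ
    have hΨ0 : Ψ (X 0) = Polynomial.C (o Polynomial.X) := by simp [hΨ]
    have hΨ1 : Ψ (X 1) = Polynomial.C y * Polynomial.X := by simp [hΨ]
    have hΨ2 : Ψ (X 2) = Polynomial.X := by simp [hΨ]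
    have hΨq : Ψ q = 0 := by
      have h0 : Polynomial.C y ^ 2 + Polynomial.C (o Polynomial.X) * Polynomial.C y
          + 1 = (0 : Polynomial D) := by
        rw [← Polynomial.C_pow, ← Polynomial.C_mul, ← Polynomial.C_1, ← Polynomial.C_add,
          ← Polynomial.C_add, hy, Polynomial.C_0]
      rw [hq, map_add, map_add, map_mul, map_mul, map_pow, map_pow, hΨ0, hΨ1, hΨ2]
      linear_combination (Polynomial.X : Polynomial D) ^ 2 * h0
    have hΨpc : ∀ p : Polynomial k, Ψ (pc p) = Polynomial.C (o p) := by
      intro p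
      have e1 : Ψ (pc p) = Polynomial.aeval (Polynomial.C (o Polynomial.X)) p := by
        rw [hpc]
        rw [← Polynomial.aeval_algHom_apply Ψ (X 0) p, hΨ0]
      have e2 : o p = Polynomial.aeval (o Polynomial.X) p := by
        have := Polynomial.aeval_algHom_apply (IsScalarTower.toAlgHom k (Polynomial k) D)
          Polynomial.X p
        simp only [Polynomial.aeval_X_left_apply, IsScalarTower.coe_toAlgHom',
          AdjoinRoot.algebraMap_eq] at this
        exact this.symm
      have e3 : Polynomial.aeval (Polynomial.C (o Polynomial.X)) p
          = Polynomial.C (Polynomial.aeval (o Polynomial.X) p) := by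
        have := Polynomial.aeval_algHom_apply (IsScalarTower.toAlgHom k D (Polynomial D))
          (o Polynomial.X) p
        simpa [Polynomial.algebraMap_eq] using this
      rw [e1, e3, ← e2]
    -- constant coefficient of Ψ x lies in the image of o
    have hcc : ∀ x : MvPolynomial (Fin 3) k,
        (Ψ x).coeff 0 = o (MvPolynomial.aeval ![Polynomial.X, 0, 0] x) := by
      intro x
      have hFG : (((Polynomial.aeval (0 : D)).restrictScalars k).comp Ψ)
          = (IsScalarTower.toAlgHom k (Polynomial k) D).comp
              (MvPolynomial.aeval ![Polynomial.X, 0, 0]) := by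
        apply MvPolynomial.algHom_ext
        intro i
        fin_cases i <;>
          simp [hΨ0, hΨ1, hΨ2, ho, ← AdjoinRoot.algebraMap_eq] <;> rfl
      have := AlgHom.congr_fun hFG x
      simp only [AlgHom.coe_comp, AlgHom.coe_restrictScalars', Function.comp_apply,
        IsScalarTower.coe_toAlgHom', AdjoinRoot.algebraMap_eq] at this
      rw [Polynomial.coeff_zero_eq_eval_zero, ← Polynomial.coe_aeval_eq_eval]
      exact this
    -- decompose the membership
    rw [Ideal.mem_span_insert] at hmem
    obtain ⟨c1, z, hz, hx⟩ := hmem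
    rw [Ideal.mem_span_insert] at hz
    obtain ⟨c2, z2, hz2, hzeq⟩ := hz
    rw [Ideal.mem_span_singleton'] at hz2
    obtain ⟨c3, hc3⟩ := hz2
    have heq : pc g * X 1 * (X 2) ^ m
        = c1 * (X 1) ^ (m + 1) + (c2 * (X 2) ^ (m + 1) + c3 * q) := by
      rw [← hc3] at hzeq
      rw [← hzeq]
      exact hx
    have hE := congrArg Ψ heq
    rw [map_add, map_add, map_mul, map_mul, map_mul, map_mul, map_mul, map_pow, map_pow,
      map_pow, hΨpc, hΨ1, hΨ2, hΨq, mul_zero, add_zero] at hE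
    -- bring both sides to the shape (· * X^(m+1)) and take the coefficient
    set h1 : Polynomial k := MvPolynomial.aeval ![Polynomial.X, 0, 0] c1 with hh1
    set h2 : Polynomial k := MvPolynomial.aeval ![Polynomial.X, 0, 0] c2 with hh2
    have hE' : (Polynomial.C (o g) * Polynomial.C y) * Polynomial.X ^ (m + 1)
        = (Ψ c1 * Polynomial.C (y ^ (m + 1))) * Polynomial.X ^ (m + 1)
          + Ψ c2 * Polynomial.X ^ (m + 1) := by
      have hcp : (Polynomial.C y * Polynomial.X) ^ (m + 1)
          = Polynomial.C (y ^ (m + 1)) * Polynomial.X ^ (m + 1) := by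
        rw [mul_pow, Polynomial.C_pow]
      linear_combination hE + Ψ c1 * hcp
    have cmx : ∀ p : Polynomial D,
        (p * Polynomial.X ^ (m + 1)).coeff (m + 1) = p.coeff 0 := fun p => by
      simpa using Polynomial.coeff_mul_X_pow p (m + 1) 0
    have hE'' := congrArg (fun p : Polynomial D => p.coeff (m + 1)) hE'
    simp only [Polynomial.coeff_add, cmx, Polynomial.mul_coeff_zero,
      Polynomial.coeff_C_zero, hcc] at hE''
    -- hE'' : o g * y = o h1 * y ^ (m+1) + o h2
    rw [hyp m] at hE''
    have hfin : o (0 : Polynomial k) + o g * y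
        = o (h2 + (-1) ^ m * h1 * V m) + o ((-1) ^ m * h1 * P m) * y := by
      simp only [map_add, map_mul, map_pow, map_neg, map_one, map_zero]
      linear_combination hE''
    have := congrArg
      (fun d : D => ((AdjoinRoot.modByMonicHom hmon) d).coeff 1) hfin
    simp only [hρ] at this
    exact ⟨(-1) ^ m * h1, by linear_combination this⟩
  · -- easy direction
    rintro ⟨h, rfl⟩
    obtain ⟨w, hw⟩ := hcl m
    have hε : ((-1 : MvPolynomial (Fin 3) k) ^ m) * ((-1) ^ m) = 1 := by
      rw [← pow_add]
      exact Even.neg_one_pow ⟨m, rfl⟩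
    have hA : pc (P m) * X 1 * (X 2) ^ m
        = (-1 : MvPolynomial (Fin 3) k) ^ m * (X 1) ^ (m + 1)
          - (-1) ^ m * (q * w) - pc (V m) * (X 2) ^ (m + 1) := by
      linear_combination -((-1 : MvPolynomial (Fin 3) k) ^ m * hw) -
        (pc (P m) * X 1 * (X 2) ^ m + pc (V m) * (X 2) ^ (m + 1)) * hε
    have hmem1 : (X 1 : MvPolynomial (Fin 3) k) ^ (m + 1) ∈
        Ideal.span {(X 1 : MvPolynomial (Fin 3) k) ^ (m + 1), (X 2) ^ (m + 1), q} :=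
      Ideal.subset_span (by simp)
    have hmem2 : (X 2 : MvPolynomial (Fin 3) k) ^ (m + 1) ∈
        Ideal.span {(X 1 : MvPolynomial (Fin 3) k) ^ (m + 1), (X 2) ^ (m + 1), q} :=
      Ideal.subset_span (by simp)
    have hmemq : q ∈
        Ideal.span {(X 1 : MvPolynomial (Fin 3) k) ^ (m + 1), (X 2) ^ (m + 1), q} :=
      Ideal.subset_span (by simp)
    have hAmem : pc (P m) * X 1 * (X 2) ^ m ∈
        Ideal.span {(X 1 : MvPolynomial (Fin 3) k) ^ (m + 1), (X 2) ^ (m + 1), q} := by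
      rw [hA]
      exact Ideal.sub_mem _ (Ideal.sub_mem _ (Ideal.mul_mem_left _ _ hmem1)
        (Ideal.mul_mem_left _ _ (Ideal.mul_mem_right _ _ hmemq)))
        (Ideal.mul_mem_left _ _ hmem2)
    have : Polynomial.aeval (X 0 : MvPolynomial (Fin 3) k) (P m * h) * X 1 * (X 2) ^ m
        = pc h * (pc (P m) * X 1 * (X 2) ^ m) := by
      show pc (P m * h) * X 1 * (X 2) ^ m = _
      rw [hpcmul]; ring
    rw [this]
    exact Ideal.mul_mem_left _ _ hAmem
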